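/- In the restricted Jordan plane B(V) = k⟨x,y⟩/(x^p, y^p, yx − xy + (1/2)x²) over a field of characteristic p > 2, the family (x^i y^j)_{0 ≤ i,j ≤ p−1} is a linear basis; in particular dim B(V) = p². -/

import Mathlib

/-- Defining relations of the restricted Jordan plane
`B(V) = k⟨x,y⟩/(x^p, y^p, yx - xy + (1/2)x²)`, with `x = ι 0`, `y = ι 1`. -/
inductive JRel (K : Type*) [Field K] (p : ℕ) :
    FreeAlgebra K (Fin 2) → FreeAlgebra K (Fin 2) → Prop
  | xp : JRel K p ((FreeAlgebra.ι K (0 : Fin 2)) ^ p) 0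
  | yp : JRel K p ((FreeAlgebra.ι K (1 : Fin 2)) ^ p) 0
  | comm : JRel K p (FreeAlgebra.ι K (1 : Fin 2) * FreeAlgebra.ι K (0 : Fin 2))
      (FreeAlgebra.ι K (0 : Fin 2) * FreeAlgebra.ι K (1 : Fin 2)
        - (1/2 : K) • (FreeAlgebra.ι K (0 : Fin 2)) ^ 2)

namespace JPP

variable (K : Type*) [Field K] (p : ℕ)

/-- shift in first coordinate (left mult by x on basis x^i y^j, dual form) -/
noncomputable def Xop : ((ℕ × ℕ) → K) →ₗ[K] ((ℕ × ℕ) → K) where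
  toFun f v := if 1 ≤ v.1 ∧ v.1 < p then f (v.1 - 1, v.2) else 0
  map_add' f g := by funext v; by_cases h : 1 ≤ v.1 ∧ v.1 < p <;> simp [h]
  map_smul' c f := by funext v; by_cases h : 1 ≤ v.1 ∧ v.1 < p <;> simp [h]

noncomputable def Sop : ((ℕ × ℕ) → K) →ₗ[K] ((ℕ × ℕ) → K) where
  toFun f v := if 1 ≤ v.2 ∧ v.2 < p then f (v.1, v.2 - 1) else 0
  map_add' f g := by funext v; by_cases h : 1 ≤ v.2 ∧ v.2 < p <;> simp [h]
  map_smul' c f := by funext v; by_cases h : 1 ≤ v.2 ∧ v.2 < p <;> simp [h]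

noncomputable def Nop : ((ℕ × ℕ) → K) →ₗ[K] ((ℕ × ℕ) → K) where
  toFun f v := -(((v.1 - 1 : ℕ) : K) / 2) *
    (if 1 ≤ v.1 ∧ v.1 < p then f (v.1 - 1, v.2) else 0)
  map_add' f g := by funext v; by_cases h : 1 ≤ v.1 ∧ v.1 < p <;> simp [h, mul_add]
  map_smul' c f := by funext v; by_cases h : 1 ≤ v.1 ∧ v.1 < p <;> simp [h] <;> ring

noncomputable def Yop : ((ℕ × ℕ) → K) →ₗ[K] ((ℕ × ℕ) → K) := Sop K p + Nop K p

lemma Xop_apply (f : (ℕ × ℕ) → K) (a b : ℕ) :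
    Xop K p f (a, b) = if 1 ≤ a ∧ a < p then f (a - 1, b) else 0 := rfl

lemma Yop_apply (f : (ℕ × ℕ) → K) (a b : ℕ) :
    Yop K p f (a, b) = (if 1 ≤ b ∧ b < p then f (a, b - 1) else 0)
      - (((a - 1 : ℕ) : K) / 2) * (if 1 ≤ a ∧ a < p then f (a - 1, b) else 0) := by
  simp only [Yop, LinearMap.add_apply, Sop, Nop, LinearMap.coe_mk, AddHom.coe_mk, Pi.add_apply]
  split_ifs <;> ring

/-- generic nilpotency for first-coordinate-raising operators -/
lemma pow_fst_zero (hp : 0 < p) (T : ((ℕ × ℕ) → K) →ₗ[K] ((ℕ × ℕ) → K)) (g : ℕ → K)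
    (H : ∀ f a b, T f (a, b) = g a * (if 1 ≤ a ∧ a < p then f (a - 1, b) else 0)) :
    T ^ p = 0 := by
  have key : ∀ m (f : (ℕ × ℕ) → K) a b, a < m ∨ (1 ≤ m ∧ p ≤ a) → (T ^ m) f (a, b) = 0 := by
    intro m
    induction m with
    | zero => intro f a b h; omega
    | succ m ih =>
      intro f a b h
      have h1 : (T ^ (m + 1)) f (a, b) = T ((T ^ m) f) (a, b) := by
        rw [pow_succ', Module.End.mul_apply]
      rw [h1, H]
      split_ifs with hc
      · rw [ih _ _ _ (by omega), mul_zero]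
      · rw [mul_zero]
  ext f v
  exact key p f v.1 v.2 (by omega)

lemma pow_snd_zero (hp : 0 < p) (T : ((ℕ × ℕ) → K) →ₗ[K] ((ℕ × ℕ) → K))
    (H : ∀ f a b, T f (a, b) = if 1 ≤ b ∧ b < p then f (a, b - 1) else 0) :
    T ^ p = 0 := by
  have key : ∀ m (f : (ℕ × ℕ) → K) a b, b < m ∨ (1 ≤ m ∧ p ≤ b) → (T ^ m) f (a, b) = 0 := by
    intro m
    induction m with
    | zero => intro f a b h; omega
    | succ m ih =>
      intro f a b h
      have h1 : (T ^ (m + 1)) f (a, b) = T ((T ^ m) f) (a, b) := by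
        rw [pow_succ', Module.End.mul_apply]
      rw [h1, H]
      split_ifs with hc
      · exact ih _ _ _ (by omega)
      · rfl
  ext f v
  exact key p f v.1 v.2 (by omega)

lemma Xop_pow_p (hp : 0 < p) : (Xop K p) ^ p = 0 :=
  pow_fst_zero K p hp _ (fun _ => 1) (by intro f a b; rw [Xop_apply, one_mul])

lemma commute_SN : Commute (Sop K p) (Nop K p) := by
  show _ * _ = _ * _
  ext f v
  obtain ⟨a, b⟩ := v
  simp only [Module.End.mul_apply, Sop, Nop, LinearMap.coe_mk, AddHom.coe_mk]
  split_ifs <;> simp_all <;> ring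

lemma Yop_pow_p [Fact p.Prime] [CharP K p] : (Yop K p) ^ p = 0 := by
  have hp : 0 < p := (Fact.out : p.Prime).pos
  have hnt : Nontrivial (((ℕ × ℕ) → K) →ₗ[K] ((ℕ × ℕ) → K)) := by
    refine ⟨1, 0, fun h => ?_⟩
    have := congrFun (LinearMap.congr_fun h (fun _ => (1 : K))) (0, 0)
    simp at this
  have hch : CharP (((ℕ × ℕ) → K) →ₗ[K] ((ℕ × ℕ) → K)) p :=
    charP_of_injective_ringHom (algebraMap K _).injective p
  rw [Yop, add_pow_char_of_commute p (commute_SN K p)]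
  rw [pow_snd_zero K p hp _ (fun f a b => rfl),
    pow_fst_zero K p hp _ (fun a => -(((a - 1 : ℕ) : K) / 2)) (fun f a b => rfl), add_zero]

/-- the commutation relation at the operator level -/
lemma op_comm : Yop K p * Xop K p =
    Xop K p * Yop K p - (1 / 2 : K) • (Xop K p) ^ 2 := by
  ext f v
  obtain ⟨a, b⟩ := v
  simp only [Module.End.mul_apply, LinearMap.sub_apply, LinearMap.smul_apply, pow_two,
    Pi.sub_apply, Pi.smul_apply, smul_eq_mul]
  simp only [Xop_apply, Yop_apply]
  by_cases h1 : 1 ≤ a ∧ a < p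
  · by_cases h2 : 1 ≤ a - 1 ∧ a - 1 < p
    · have e1 : a - 1 - 1 = a - 2 := by omega
      have e2 : ((a - 1 : ℕ) : K) = ((a - 2 : ℕ) : K) + 1 := by
        have : a - 1 = (a - 2) + 1 := by omega
        rw [this, Nat.cast_add, Nat.cast_one]
      simp only [h1, h2, if_true, e1]
      split_ifs <;> (rw [e2]; ring)
    · simp only [h1, h2, if_true, if_false]
      split_ifs <;> ring
  · simp only [h1, if_false]
    split_ifs <;> simp_all <;> ring


-- ## delta functions
noncomputable def δ (w : ℕ × ℕ) : (ℕ × ℕ) → K := fun v => if v = w then 1 else 0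

lemma Xop_delta (i j : ℕ) (hi : i + 1 < p) :
    Xop K p (δ K (i, j)) = δ K (i + 1, j) := by
  funext v
  obtain ⟨a, b⟩ := v
  rw [Xop_apply]
  simp only [δ, Prod.mk.injEq]
  split_ifs <;> simp_all <;> omega

lemma Yop_delta (j : ℕ) (hj : j + 1 < p) :
    Yop K p (δ K (0, j)) = δ K (0, j + 1) := by
  funext v
  obtain ⟨a, b⟩ := v
  rw [Yop_apply]
  simp only [δ, Prod.mk.injEq]
  split_ifs with h1 h2 h3 h4 <;> simp_all <;> try omega
  all_goals {
    first
    | (have ha : a = 1 := by omega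
       subst ha
       norm_num)
    | omega }

lemma Yop_pow_delta (j : ℕ) (hj : j < p) :
    ((Yop K p) ^ j) (δ K (0, 0)) = δ K (0, j) := by
  induction j with
  | zero => simp
  | succ j ih =>
    rw [pow_succ', Module.End.mul_apply, ih (by omega), Yop_delta K p j hj]

lemma Xop_pow_delta (i j : ℕ) (hi : i < p) :
    ((Xop K p) ^ i) (δ K (0, j)) = δ K (i, j) := by
  induction i with
  | zero => simp
  | succ i ih =>
    rw [pow_succ', Module.End.mul_apply, ih (by omega), Xop_delta K p i j hi]

-- ## the representation
noncomputable def φ0 : FreeAlgebra K (Fin 2) →ₐ[K] (((ℕ × ℕ) → K) →ₗ[K] ((ℕ × ℕ) → K)) :=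
  FreeAlgebra.lift K ![Xop K p, Yop K p]

lemma φ0_x : φ0 K p (FreeAlgebra.ι K (0 : Fin 2)) = Xop K p := by
  simp [φ0]

lemma φ0_y : φ0 K p (FreeAlgebra.ι K (1 : Fin 2)) = Yop K p := by
  simp [φ0]

variable [Fact p.Prime] [CharP K p]

noncomputable def φ : RingQuot (JRel K p) →ₐ[K] (((ℕ × ℕ) → K) →ₗ[K] ((ℕ × ℕ) → K)) :=
  RingQuot.liftAlgHom K ⟨φ0 K p, by
    rintro x y (_ | _ | _)
    · rw [map_pow, φ0_x, map_zero, Xop_pow_p K p (Fact.out : p.Prime).pos]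
    · rw [map_pow, φ0_y, map_zero, Yop_pow_p K p]
    · rw [map_mul, map_sub, map_smul, map_mul, map_pow, φ0_x, φ0_y, op_comm]⟩

lemma φ_x : φ K p (RingQuot.mkAlgHom K (JRel K p) (FreeAlgebra.ι K (0 : Fin 2))) = Xop K p := by
  rw [φ, RingQuot.liftAlgHom_mkAlgHom_apply, φ0_x]

lemma φ_y : φ K p (RingQuot.mkAlgHom K (JRel K p) (FreeAlgebra.ι K (1 : Fin 2))) = Yop K p := by
  rw [φ, RingQuot.liftAlgHom_mkAlgHom_apply, φ0_y]

-- ## relations in the quotient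
noncomputable def xq : RingQuot (JRel K p) :=
  RingQuot.mkAlgHom K (JRel K p) (FreeAlgebra.ι K (0 : Fin 2))

noncomputable def yq : RingQuot (JRel K p) :=
  RingQuot.mkAlgHom K (JRel K p) (FreeAlgebra.ι K (1 : Fin 2))

lemma xq_pow_p : xq K p ^ p = 0 := by
  rw [xq, ← map_pow]
  rw [RingQuot.mkAlgHom_rel K JRel.xp, map_zero]

lemma yq_pow_p : yq K p ^ p = 0 := by
  rw [yq, ← map_pow]
  rw [RingQuot.mkAlgHom_rel K JRel.yp, map_zero]

lemma yx_rel : yq K p * xq K p = xq K p * yq K p - (1/2 : K) • xq K p ^ 2 := by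
  have h := RingQuot.mkAlgHom_rel K (JRel.comm (K := K) (p := p))
  simpa [map_mul, map_sub, map_pow, xq, yq] using h

lemma yx_pow (i : ℕ) :
    yq K p * xq K p ^ i = xq K p ^ i * yq K p - ((i : K)/2) • xq K p ^ (i + 1) := by
  induction i with
  | zero => simp
  | succ i ih =>
    have h1 : yq K p * xq K p ^ (i+1) = (yq K p * xq K p ^ i) * xq K p := by
      rw [mul_assoc, ← pow_succ]
    rw [h1, ih, sub_mul, mul_assoc, yx_rel, smul_mul_assoc, ← pow_succ]
    rw [mul_sub, mul_smul_comm, ← mul_assoc, ← pow_succ]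
    have e : xq K p ^ i * xq K p ^ 2 = xq K p ^ (i + 1 + 1) := by
      rw [← pow_add]
    rw [e, sub_sub, ← add_smul]
    congr 1
    push_cast
    ring

end JPP

/-- In the restricted Jordan plane over a field of characteristic `p > 2`, the family
`(x^i y^j)_{0 ≤ i,j ≤ p-1}` is a linear basis; in particular its dimension is `p²`. -/
theorem stmt5 (K : Type*) [Field K] (p : ℕ) [Fact p.Prime] (hp2 : 2 < p) [CharP K p] :
    (∃ b : Module.Basis (Fin p × Fin p) K (RingQuot (JRel K p)),
      ∀ ij : Fin p × Fin p, b ij =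
        (RingQuot.mkAlgHom K (JRel K p) (FreeAlgebra.ι K (0 : Fin 2))) ^ (ij.1 : ℕ) *
        (RingQuot.mkAlgHom K (JRel K p) (FreeAlgebra.ι K (1 : Fin 2))) ^ (ij.2 : ℕ)) ∧
    Module.finrank K (RingQuot (JRel K p)) = p ^ 2 := by
  classical
  have hp : 0 < p := (Fact.out : p.Prime).pos
  set v : Fin p × Fin p → RingQuot (JRel K p) :=
    fun ij => JPP.xq K p ^ (ij.1 : ℕ) * JPP.yq K p ^ (ij.2 : ℕ) with hv
  -- evaluation of monomials in the representation
  have hθ : ∀ ij : Fin p × Fin p,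
      (JPP.φ K p (v ij)) (JPP.δ K (0, 0)) = JPP.δ K ((ij.1 : ℕ), (ij.2 : ℕ)) := by
    intro ij
    have h : JPP.φ K p (v ij) = (JPP.Xop K p) ^ (ij.1 : ℕ) * (JPP.Yop K p) ^ (ij.2 : ℕ) := by
      simp only [hv, map_mul, map_pow, JPP.xq, JPP.yq, JPP.φ_x, JPP.φ_y]
    rw [h, Module.End.mul_apply, JPP.Yop_pow_delta K p _ ij.2.isLt,
      JPP.Xop_pow_delta K p _ _ ij.1.isLt]
  have hli : LinearIndependent K v := by
    rw [Fintype.linearIndependent_iff]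
    intro g hg w
    have h2 : (JPP.φ K p (∑ i, g i • v i)) (JPP.δ K (0, 0)) ((w.1 : ℕ), (w.2 : ℕ)) = 0 := by
      rw [hg, map_zero]
      simp
    rw [map_sum, LinearMap.sum_apply, Finset.sum_apply] at h2
    have h3 : ∀ i : Fin p × Fin p,
        (JPP.φ K p (g i • v i)) (JPP.δ K (0, 0)) ((w.1 : ℕ), (w.2 : ℕ))
          = if i = w then g i else 0 := by
      intro i
      rw [map_smul, LinearMap.smul_apply, Pi.smul_apply, hθ i, smul_eq_mul]
      simp only [JPP.δ, Prod.mk.injEq]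
      by_cases h : i = w
      · subst h
        simp
      · have hne : ¬((w.1 : ℕ) = (i.1 : ℕ) ∧ (w.2 : ℕ) = (i.2 : ℕ)) := by
          intro hc
          exact h (Prod.ext (Fin.ext hc.1.symm) (Fin.ext hc.2.symm))
        simp [h, hne]
    rw [Finset.sum_congr rfl (fun i _ => h3 i)] at h2
    rwa [Finset.sum_ite_eq' Finset.univ w g, if_pos (Finset.mem_univ w)] at h2
  -- spanning
  have hxmul : ∀ s ∈ Submodule.span K (Set.range v),
      JPP.xq K p * s ∈ Submodule.span K (Set.range v) := by
    intro s hs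
    induction hs using Submodule.span_induction with
    | mem s hsmem =>
      obtain ⟨ij, rfl⟩ := hsmem
      have h1 : JPP.xq K p * v ij
          = JPP.xq K p ^ ((ij.1 : ℕ) + 1) * JPP.yq K p ^ (ij.2 : ℕ) := by
        rw [hv, ← mul_assoc, ← pow_succ']
      by_cases hi : (ij.1 : ℕ) + 1 < p
      · rw [h1]
        exact Submodule.subset_span ⟨(⟨(ij.1 : ℕ) + 1, hi⟩, ij.2), rfl⟩
      · have hip : (ij.1 : ℕ) + 1 = p := by
          have := ij.1.isLt
          omega
        rw [h1, hip, JPP.xq_pow_p, zero_mul]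
        exact Submodule.zero_mem _
    | zero =>
      rw [mul_zero]
      exact Submodule.zero_mem _
    | add a b ha hb hpa hpb =>
      rw [mul_add]
      exact Submodule.add_mem _ hpa hpb
    | smul c a ha hpa =>
      rw [mul_smul_comm]
      exact Submodule.smul_mem _ _ hpa
  have hymul : ∀ s ∈ Submodule.span K (Set.range v),
      JPP.yq K p * s ∈ Submodule.span K (Set.range v) := by
    intro s hs
    induction hs using Submodule.span_induction with
    | mem s hsmem =>
      obtain ⟨ij, rfl⟩ := hsmem
      have h1 : JPP.yq K p * v ij =
          JPP.xq K p ^ (ij.1 : ℕ) * JPP.yq K p ^ ((ij.2 : ℕ) + 1)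
            - (((ij.1 : ℕ) : K)/2) • (JPP.xq K p ^ ((ij.1 : ℕ) + 1) * JPP.yq K p ^ (ij.2 : ℕ)) := by
        rw [hv, ← mul_assoc, JPP.yx_pow, sub_mul, mul_assoc, ← pow_succ', smul_mul_assoc]
      rw [h1]
      refine Submodule.sub_mem _ ?_ (Submodule.smul_mem _ _ ?_)
      · by_cases hj : (ij.2 : ℕ) + 1 < p
        · exact Submodule.subset_span ⟨(ij.1, ⟨(ij.2 : ℕ) + 1, hj⟩), rfl⟩
        · have hjp : (ij.2 : ℕ) + 1 = p := by
            have := ij.2.isLt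
            omega
          rw [hjp, JPP.yq_pow_p, mul_zero]
          exact Submodule.zero_mem _
      · by_cases hi : (ij.1 : ℕ) + 1 < p
        · exact Submodule.subset_span ⟨(⟨(ij.1 : ℕ) + 1, hi⟩, ij.2), rfl⟩
        · have hip : (ij.1 : ℕ) + 1 = p := by
            have := ij.1.isLt
            omega
          rw [hip, JPP.xq_pow_p, zero_mul]
          exact Submodule.zero_mem _
    | zero =>
      rw [mul_zero]
      exact Submodule.zero_mem _
    | add a b ha hb hpa hpb =>
      rw [mul_add]
      exact Submodule.add_mem _ hpa hpb
    | smul c a ha hpa =>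
      rw [mul_smul_comm]
      exact Submodule.smul_mem _ _ hpa
  have hgen : ∀ w : FreeAlgebra K (Fin 2), ∀ s ∈ Submodule.span K (Set.range v),
      RingQuot.mkAlgHom K (JRel K p) w * s ∈ Submodule.span K (Set.range v) := by
    intro w
    induction w using FreeAlgebra.induction with
    | grade0 r =>
      intro s hs
      rw [AlgHom.commutes, ← Algebra.smul_def]
      exact Submodule.smul_mem _ _ hs
    | grade1 i =>
      fin_cases i
      · exact hxmul
      · exact hymul
    | mul a b ha hb =>
      intro s hs
      rw [map_mul, mul_assoc]
      exact ha _ (hb _ hs)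
    | add a b ha hb =>
      intro s hs
      rw [map_add, add_mul]
      exact Submodule.add_mem _ (ha _ hs) (hb _ hs)
  have h1S : (1 : RingQuot (JRel K p)) ∈ Submodule.span K (Set.range v) := by
    have h0 : v (⟨0, hp⟩, ⟨0, hp⟩) = 1 := by simp [hv]
    exact h0 ▸ Submodule.subset_span ⟨_, rfl⟩
  have htop : ⊤ ≤ Submodule.span K (Set.range v) := by
    intro z _
    obtain ⟨w, rfl⟩ := RingQuot.mkAlgHom_surjective K (JRel K p) z
    simpa using hgen w 1 h1S
  let b : Module.Basis (Fin p × Fin p) K (RingQuot (JRel K p)) := Module.Basis.mk hli htop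
  refine ⟨⟨b, fun ij => ?_⟩, ?_⟩
  · rw [Module.Basis.mk_apply, hv]
    rfl
  · rw [Module.finrank_eq_card_basis b, pow_two]
    simp
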